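/- Let h : ℝ → ℂ be measurable with ∫_ℝ h(t) dt = 1 and |h(t)| ≤ C₁(1 + |t|)^{−3} for all t ∈ ℝ, and let p : ℝ → ℝ be continuous with p(−r) = p(r) and |p(r)| ≤ C₂(1 + |r|) for all r ∈ ℝ. Then there exists C > 0 such that for all λ ≥ 1, | ∫_{−λ}^{λ} ∫_ℝ h(t − r) p(r) dr dt − ∫_{−λ}^{λ} p(r) dr | ≤ Cλ. -/

import Mathlib

open Real MeasureTheory

set_option maxHeartbeats 1000000 in
/-- Smoothing against an integrable kernel of total integral one with cubic
decay changes `∫_{-λ}^{λ} p` by at most `O(λ)` for even `p` of linear growth. -/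
theorem smoothed_integral_asymptotics (h : ℝ → ℂ) (hmeas : Measurable h)
    (hint : (∫ t : ℝ, h t) = 1) (C₁ : ℝ)
    (hdecay : ∀ t : ℝ, ‖h t‖ ≤ C₁ * (1 + |t|) ^ (-3 : ℤ))
    (p : ℝ → ℝ) (hp : Continuous p) (heven : ∀ r : ℝ, p (-r) = p r) (C₂ : ℝ)
    (hgrowth : ∀ r : ℝ, |p r| ≤ C₂ * (1 + |r|)) :
    ∃ C : ℝ, 0 < C ∧ ∀ lam : ℝ, 1 ≤ lam →
      ‖(∫ t in (-lam)..lam, ∫ s : ℝ, h (t - s) * (p s : ℂ))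
        - ∫ s in (-lam)..lam, (p s : ℂ)‖ ≤ C * lam := by
  have hpos : ∀ u : ℝ, (0:ℝ) < 1 + |u| := fun u => by positivity
  have hdecayR : ∀ t : ℝ, ‖h t‖ ≤ C₁ * (1 + |t|) ^ (-(3:ℝ)) := by
    intro t
    have e : (1 + |t|) ^ (-(3:ℝ)) = (1 + |t|) ^ (-3:ℤ) := by
      rw [← Real.rpow_intCast (1 + |t|) (-3)]; norm_num
    rw [e]; exact hdecay t
  have hC₁ : 0 ≤ C₁ := by
    have := hdecay 0
    simp only [abs_zero, add_zero] at this
    have h1 : ((1:ℝ)) ^ (-3:ℤ) = 1 := by norm_num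
    rw [h1, mul_one] at this
    exact le_trans (norm_nonneg _) this
  have hC₂ : 0 ≤ C₂ := by
    have := hgrowth 0
    simp only [abs_zero, add_zero, mul_one] at this
    exact le_trans (abs_nonneg _) this
  -- integrability of h
  have hi3 : Integrable (fun u : ℝ => (1+‖u‖)^(-(3:ℝ))) volume :=
    integrable_one_add_norm (by norm_num)
  have hInt_h : Integrable h volume := by
    refine Integrable.mono' (hi3.const_mul C₁) hmeas.aestronglyMeasurable ?_
    filter_upwards with u
    simpa [Real.norm_eq_abs] using hdecayR u
  have hi32 : Integrable (fun u : ℝ => (1+‖u‖)^(-((3:ℝ)/2))) volume :=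
    integrable_one_add_norm (by norm_num)
  set M : ℝ := ∫ u : ℝ, (1+|u|)^(-((3:ℝ)/2)) with hMdef
  have hM0 : 0 ≤ M := integral_nonneg fun u => by positivity
  refine ⟨8*C₁*C₂*M + 1, by positivity, ?_⟩
  intro lam hlam
  have hlam0 : (0:ℝ) < lam := lt_of_lt_of_le one_pos hlam
  have hle : -lam ≤ lam := by linarith
  set S : Set ℝ := Set.Ioc (-lam) lam with hSdef
  set P : ℝ → ℝ := fun u => ∫ t in (-lam)..lam, p (t - u) with hPdef
  have hpii : ∀ a b : ℝ, IntervalIntegrable p volume a b := fun a b =>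
    hp.intervalIntegrable a b
  -- generic bound for interval integrals of p
  have hbnd : ∀ a b K : ℝ, 0 ≤ K → (∀ x ∈ Set.uIoc a b, |x| ≤ K) →
      |∫ x in a..b, p x| ≤ C₂*(1+K)*|b-a| := by
    intro a b K hK0 hK
    have := intervalIntegral.norm_integral_le_of_norm_le_const
      (C := C₂*(1+K)) (f := p) (a := a) (b := b) ?_
    · simpa [Real.norm_eq_abs] using this
    · intro x hx
      rw [Real.norm_eq_abs]
      refine (hgrowth x).trans ?_
      have := hK x hx
      nlinarith
  -- key pointwise estimate
  have key : ∀ u : ℝ, |P u - P 0| ≤ 8 * C₂ * lam * (1 + |u|) ^ ((3:ℝ)/2) := by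
    intro u
    have hPu : P u = ∫ x in (-(lam+u))..(lam - u), p x := by
      have e : P u = ∫ x in (-lam - u)..(lam - u), p x :=
        intervalIntegral.integral_comp_sub_right (a := -lam) (b := lam) p u
      rw [e]
      congr 1
      ring
    have hP0 : P 0 = ∫ x in (-lam)..lam, p x := by
      simp [hPdef]
    have h1 := intervalIntegral.integral_add_adjacent_intervals
      (hpii (-(lam+u)) (-lam)) (hpii (-lam) (lam - u))
    have h2 := intervalIntegral.integral_add_adjacent_intervals
      (hpii (-lam) (lam - u)) (hpii (lam - u) lam)
    have h3 : (∫ x in (-(lam+u))..(-lam), p x) = ∫ x in lam..(lam+u), p x := by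
      have e := intervalIntegral.integral_comp_neg (a := -(lam+u)) (b := -lam) p
      simp only [heven, neg_neg] at e
      exact e
    have hdiff : P u - P 0
        = (∫ x in lam..(lam+u), p x) - (∫ x in (lam - u)..lam, p x) := by
      rw [hPu, hP0, ← h1, ← h2, h3]; ring
    have b1 : |∫ x in lam..(lam+u), p x| ≤ C₂*(1+(lam+|u|))*|u| := by
      have := hbnd lam (lam+u) (lam+|u|) (by positivity) ?_
      · simpa using this
      · intro x hx
        have hx1 : min lam (lam+u) < x := hx.1
        have hx2 : x ≤ max lam (lam+u) := hx.2
        have e1 : -(lam+|u|) ≤ min lam (lam+u) :=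
          le_min (by linarith [abs_nonneg u]) (by linarith [neg_abs_le u])
        have e2 : max lam (lam+u) ≤ lam+|u| :=
          max_le (by linarith [abs_nonneg u]) (by linarith [le_abs_self u])
        exact abs_le.mpr ⟨by linarith, by linarith⟩
    have b2 : |∫ x in (lam - u)..lam, p x| ≤ C₂*(1+(lam+|u|))*|u| := by
      have := hbnd (lam - u) lam (lam+|u|) (by positivity) ?_
      · have e : |lam - (lam - u)| = |u| := by rw [show lam - (lam - u) = u by ring]
        rw [e] at this; exact this
      · intro x hx
        have hx1 : min (lam - u) lam < x := hx.1
        have hx2 : x ≤ max (lam - u) lam := hx.2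
        have e1 : -(lam+|u|) ≤ min (lam - u) lam :=
          le_min (by linarith [le_abs_self u]) (by linarith [abs_nonneg u])
        have e2 : max (lam - u) lam ≤ lam+|u| :=
          max_le (by linarith [neg_abs_le u]) (by linarith [abs_nonneg u])
        exact abs_le.mpr ⟨by linarith, by linarith⟩
    have b3 : |P u| ≤ C₂*(1+(lam+|u|))*(2*lam) := by
      rw [hPu]
      have := hbnd (-(lam+u)) (lam - u) (lam+|u|) (by positivity) ?_
      · have e : |lam - u - -(lam+u)| = 2*lam := by
          rw [show lam - u - -(lam+u) = 2*lam by ring]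
          exact abs_of_pos (by linarith)
        rw [e] at this; exact this
      · intro x hx
        have hx1 : min (-(lam+u)) (lam - u) < x := hx.1
        have hx2 : x ≤ max (-(lam+u)) (lam - u) := hx.2
        have e1 : -(lam+|u|) ≤ min (-(lam+u)) (lam - u) :=
          le_min (by linarith [le_abs_self u]) (by linarith [neg_abs_le u, le_abs_self u])
        have e2 : max (-(lam+u)) (lam - u) ≤ lam+|u| :=
          max_le (by linarith [neg_abs_le u]) (by linarith [neg_abs_le u])
        exact abs_le.mpr ⟨by linarith, by linarith⟩
    have b4 : |P 0| ≤ C₂*(1+lam)*(2*lam) := by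
      rw [hP0]
      have := hbnd (-lam) lam lam (by linarith) ?_
      · have e : |lam - -lam| = 2*lam := by
          rw [show lam - -lam = 2*lam by ring]; exact abs_of_pos (by linarith)
        rw [e] at this; exact this
      · intro x hx
        have hx1 : min (-lam) lam < x := hx.1
        have hx2 : x ≤ max (-lam) lam := hx.2
        have e1 : -lam ≤ min (-lam) lam := le_min le_rfl (by linarith)
        have e2 : max (-lam) lam ≤ lam := max_le (by linarith) le_rfl
        exact abs_le.mpr ⟨by linarith, by linarith⟩
    have hA : |P u - P 0| ≤ 2*C₂*(1+(lam+|u|))*|u| := by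
      rw [hdiff]
      calc |(∫ x in lam..(lam+u), p x) - (∫ x in (lam - u)..lam, p x)|
          ≤ |∫ x in lam..(lam+u), p x| + |∫ x in (lam - u)..lam, p x| := abs_sub _ _
        _ ≤ C₂*(1+(lam+|u|))*|u| + C₂*(1+(lam+|u|))*|u| := add_le_add b1 b2
        _ = 2*C₂*(1+(lam+|u|))*|u| := by ring
    have hB : |P u - P 0| ≤ C₂*(1+(lam+|u|))*(2*lam) + C₂*(1+lam)*(2*lam) :=
      (abs_sub _ _).trans (add_le_add b3 b4)
    have hsq : Real.sqrt (1+|u|) * Real.sqrt (1+|u|) = 1+|u| :=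
      Real.mul_self_sqrt (by positivity)
    have hs1 : 1 ≤ Real.sqrt (1+|u|) := by
      nlinarith [hsq, Real.sqrt_nonneg (1+|u|), abs_nonneg u]
    have h32 : (1+|u|) ^ ((3:ℝ)/2) = (1+|u|) * Real.sqrt (1+|u|) := by
      rw [show (3:ℝ)/2 = 1 + 1/2 by norm_num, Real.rpow_add (hpos u), Real.rpow_one,
        ← Real.sqrt_eq_rpow]
    rw [h32]
    set s := Real.sqrt (1+|u|) with hsdef
    set a := |u| with hadef
    have hu0 : (0:ℝ) ≤ a := abs_nonneg u
    have hs0 : (0:ℝ) ≤ s := Real.sqrt_nonneg _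
    rcases le_or_gt lam s with hc | hc
    · -- large u : use hB
      have key1 : 2+2*lam+a ≤ 4*((1+a)*s) := by
        have k1 : a ≤ a*s := le_mul_of_one_le_right hu0 hs1
        have k2 : 4*((1+a)*s) = 4*s + 4*(a*s) := by ring
        have k3 : (0:ℝ) ≤ a*s := mul_nonneg hu0 hs0
        linarith
      calc |P u - P 0| ≤ C₂*(1+(lam+a))*(2*lam) + C₂*(1+lam)*(2*lam) := hB
        _ = (2*(C₂*lam))*(2+2*lam+a) := by ring
        _ ≤ (2*(C₂*lam))*(4*((1+a)*s)) :=
            mul_le_mul_of_nonneg_left key1 (by positivity)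
        _ = 8*C₂*lam*((1+a)*s) := by ring
    · -- small u : use hA
      have hclam : s ≤ lam := hc.le
      have hg0 : (0:ℝ) ≤ (1+a)*s := by positivity
      have g1 : (1+a) ≤ (1+a)*s := le_mul_of_one_le_right (by linarith) hs1
      have g2 : (1+a)*s ≤ lam*((1+a)*s) := le_mul_of_one_le_left hg0 hlam
      have f1 : a ≤ lam*((1+a)*s) := by linarith
      have f2 : lam*a ≤ lam*((1+a)*s) :=
        mul_le_mul_of_nonneg_left (by linarith) hlam0.le
      have f3 : a*a ≤ lam*((1+a)*s) := by
        have g3 : a*a ≤ (1+a)*(1+a) := by nlinarith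
        have g4 : (1+a)*(1+a) = ((1+a)*s)*s := by rw [← hsq]; ring
        have g5 : ((1+a)*s)*s ≤ ((1+a)*s)*lam := mul_le_mul_of_nonneg_left hclam hg0
        have g6 : ((1+a)*s)*lam = lam*((1+a)*s) := by ring
        linarith
      calc |P u - P 0| ≤ 2*C₂*(1+(lam+a))*a := hA
        _ = 2*C₂*(a + lam*a + a*a) := by ring
        _ ≤ 2*C₂*(lam*((1+a)*s) + lam*((1+a)*s) + lam*((1+a)*s)) := by
            have := add_le_add (add_le_add f1 f2) f3
            exact mul_le_mul_of_nonneg_left this (by positivity)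
        _ = 6*C₂*(lam*((1+a)*s)) := by ring
        _ ≤ 8*C₂*lam*((1+a)*s) := by nlinarith [mul_nonneg (mul_nonneg hC₂ hlam0.le) hg0]
  -- inner change of variables
  have inner : ∀ t : ℝ, (∫ s : ℝ, h (t - s) * (p s : ℂ)) = ∫ u : ℝ, h u * (p (t - u) : ℂ) := by
    intro t
    have e := integral_sub_left_eq_self (fun u : ℝ => h u * (p (t - u) : ℂ)) volume t
    simp only [sub_sub_cancel] at e
    exact e
  -- product integrability
  have hGmeas : AEStronglyMeasurable (fun z : ℝ × ℝ => h z.2 * (p (z.1 - z.2) : ℂ))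
      ((volume.restrict S).prod volume) := by
    apply Measurable.aestronglyMeasurable
    exact (hmeas.comp measurable_snd).mul
      (Complex.measurable_ofReal.comp (hp.measurable.comp (measurable_fst.sub measurable_snd)))
  have hGint : Integrable (fun z : ℝ × ℝ => h z.2 * (p (z.1 - z.2) : ℂ))
      ((volume.restrict S).prod volume) := by
    refine Integrable.mono'
      (g := fun z : ℝ × ℝ => (fun _ : ℝ => C₁*(C₂*(1+lam))) z.1 * (1+‖z.2‖)^(-(2:ℝ)))
      ?_ hGmeas ?_
    · have hg : Integrable (fun u : ℝ => (1+‖u‖)^(-(2:ℝ))) volume :=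
        integrable_one_add_norm (by norm_num)
      have hf : Integrable (fun _ : ℝ => C₁*(C₂*(1+lam))) (volume.restrict S) := by
        have : IsFiniteMeasure (volume.restrict S) := by
          constructor
          rw [Measure.restrict_apply_univ, hSdef]
          exact (measure_Ioc_lt_top)
        exact integrable_const _
      exact hf.mul_prod hg
    · rw [Measure.restrict_prod_eq_prod_univ]
      filter_upwards [ae_restrict_mem (measurableSet_Ioc.prod MeasurableSet.univ)] with z hz
      obtain ⟨hz1, -⟩ := hz
      have ht : |z.1| ≤ lam := abs_le.mpr ⟨hz1.1.le, hz1.2⟩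
      have ha : (0:ℝ) < 1 + |z.2| := hpos z.2
      have hpb : |p (z.1 - z.2)| ≤ C₂ * ((1+lam) * (1+|z.2|)) := by
        refine (hgrowth _).trans ?_
        have h1 : |z.1 - z.2| ≤ lam + |z.2| := (abs_sub _ _).trans (by linarith)
        have h2 : (1+|z.1 - z.2|) ≤ (1+lam)*(1+|z.2|) := by
          nlinarith [mul_nonneg hlam0.le (abs_nonneg z.2)]
        exact mul_le_mul_of_nonneg_left h2 hC₂
      calc ‖h z.2 * (p (z.1 - z.2) : ℂ)‖ = ‖h z.2‖ * |p (z.1 - z.2)| := by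
            rw [norm_mul, Complex.norm_real, Real.norm_eq_abs]
        _ ≤ (C₁ * (1+|z.2|) ^ (-(3:ℝ))) * (C₂ * ((1+lam) * (1+|z.2|))) :=
            mul_le_mul (hdecayR _) hpb (abs_nonneg _) (by positivity)
        _ = (C₁*(C₂*(1+lam))) * ((1+|z.2|) ^ (-(3:ℝ)) * (1+|z.2|)) := by ring
        _ = (fun _ : ℝ => C₁*(C₂*(1+lam))) z.1 * (1+‖z.2‖)^(-(2:ℝ)) := by
            have : (1+|z.2|) ^ (-(3:ℝ)) * (1+|z.2|) = (1+|z.2|) ^ (-(2:ℝ)) := by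
              rw [show (-(2:ℝ)) = (-(3:ℝ)) + 1 by norm_num, Real.rpow_add ha, Real.rpow_one]
            rw [this, Real.norm_eq_abs]
  -- main rewrite
  have e2 : ∀ u : ℝ, (∫ t in S, h u * (p (t - u) : ℂ)) = h u * ((P u : ℝ) : ℂ) := by
    intro u
    rw [integral_const_mul]
    congr 1
    rw [hSdef, ← intervalIntegral.integral_of_le hle, intervalIntegral.integral_ofReal]
  have hmain : (∫ t in (-lam)..lam, ∫ s : ℝ, h (t - s) * (p s : ℂ))
      - (∫ s in (-lam)..lam, (p s : ℂ))
      = ∫ u : ℝ, h u * (((P u - P 0 : ℝ)) : ℂ) := by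
    have e0 : (∫ t in (-lam)..lam, ∫ s : ℝ, h (t - s) * (p s : ℂ))
        = ∫ t in S, ∫ u : ℝ, h u * (p (t - u) : ℂ) := by
      rw [intervalIntegral.integral_of_le hle]
      simp only [inner, hSdef]
    have e1 : (∫ t in S, ∫ u : ℝ, h u * (p (t - u) : ℂ))
        = ∫ u : ℝ, ∫ t in S, h u * (p (t - u) : ℂ) :=
      integral_integral_swap hGint
    have e3 : (∫ s in (-lam)..lam, (p s : ℂ)) = ((P 0 : ℝ) : ℂ) := by
      have e : P 0 = ∫ s in (-lam)..lam, p s := by simp [hPdef]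
      rw [e, intervalIntegral.integral_ofReal]
    have e4 : (∫ u : ℝ, ∫ t in S, h u * (p (t - u) : ℂ))
        = ∫ u : ℝ, h u * ((P u : ℝ) : ℂ) :=
      integral_congr_ae (Filter.Eventually.of_forall e2)
    have hQint : Integrable (fun u : ℝ => h u * ((P u : ℝ) : ℂ)) volume :=
      (hGint.integral_prod_right).congr (Filter.Eventually.of_forall e2)
    have hP0int : Integrable (fun u : ℝ => h u * ((P 0 : ℝ) : ℂ)) volume :=
      hInt_h.mul_const _
    have e5 : ((P 0 : ℝ) : ℂ) = ∫ u : ℝ, h u * ((P 0 : ℝ) : ℂ) := by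
      rw [integral_mul_const, hint, one_mul]
    rw [e0, e1, e4, e3, e5, ← integral_sub hQint hP0int]
    congr 1 with u
    push_cast
    ring
  rw [hmain]
  calc ‖∫ u : ℝ, h u * (((P u - P 0 : ℝ)) : ℂ)‖
      ≤ ∫ u : ℝ, ‖h u * (((P u - P 0 : ℝ)) : ℂ)‖ := norm_integral_le_integral_norm _
    _ ≤ ∫ u : ℝ, (8*C₁*C₂*lam) * (1+|u|)^(-((3:ℝ)/2)) := by
        refine integral_mono_of_nonneg (Filter.Eventually.of_forall fun u => norm_nonneg _)
          ((hi32.const_mul (8*C₁*C₂*lam)).congr (Filter.Eventually.of_forall fun u => by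
            simp [Real.norm_eq_abs])) (Filter.Eventually.of_forall ?_)
        intro u
        simp only [norm_mul, Complex.norm_real, Real.norm_eq_abs]
        calc ‖h u‖ * |P u - P 0|
            ≤ (C₁ * (1+|u|) ^ (-(3:ℝ))) * (8*C₂*lam*(1+|u|) ^ ((3:ℝ)/2)) :=
              mul_le_mul (hdecayR u) (key u) (abs_nonneg _) (by positivity)
          _ = (8*C₁*C₂*lam) * (1+|u|)^(-((3:ℝ)/2)) := by
              rw [show (-((3:ℝ)/2)) = (-(3:ℝ)) + (3:ℝ)/2 by norm_num,
                Real.rpow_add (hpos u)]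
              ring
    _ = (8*C₁*C₂*lam) * M := by rw [integral_const_mul, ← hMdef]
    _ ≤ (8*C₁*C₂*M + 1) * lam := by
        nlinarith [mul_nonneg (mul_nonneg (mul_nonneg hC₁ hC₂) hM0) hlam0.le]
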